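/- The set F of points of S having at least one vanishing homogeneous coordinate (that is, the set of fixed points of the generalized Fermat group H = ⟨φ_0, …, φ_n⟩ acting on S) is finite of cardinality exactly (n+1)·k^{n−1}. -/

import Mathlib

/-- A nonzero vector `x ∈ ℂ^{n+1}` satisfies the defining equations of the generalized
Fermat curve of type `(k,n)`: `lam i * x₀^k + x₁^k + x_{i+2}^k = 0` for `0 ≤ i ≤ n - 2`
(with `lam 0 = 1`). -/
def fermatEqns (n k : ℕ) (lam : ℕ → ℂ) (x : Fin (n + 1) → ℂ) : Prop :=
  ∀ i : ℕ, i ≤ n - 2 → lam i * x 0 ^ k + x 1 ^ k + x (Fin.ofNat (n + 1) (i + 2)) ^ k = 0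

section GFAux

variable {n k : ℕ} {lam : ℕ → ℂ}

/-- the coordinate used to normalize points vanishing at `j` -/
def gfPivot (n : ℕ) (j : Fin (n + 1)) : Fin (n + 1) := if j = 0 then 1 else 0

/-- the forced value of `x m ^ k` for a normalized point vanishing at `j` -/
noncomputable def gfTarget (n : ℕ) (lam : ℕ → ℂ) (j m : Fin (n + 1)) : ℂ :=
  if m = 1 then -lam (j.val - 2)
  else if j = 0 then -1
  else if j = 1 then -lam (m.val - 2)
  else lam (j.val - 2) - lam (m.val - 2)

noncomputable def gfSet (n k : ℕ) (lam : ℕ → ℂ) (j m : Fin (n + 1)) : Set ℂ :=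
  if m = j then {0} else if m = gfPivot n j then {1}
  else {y : ℂ | y ^ k = gfTarget n lam j m}

/-- normalized points of the curve vanishing at coordinate `j` -/
def gfA (n k : ℕ) (lam : ℕ → ℂ) (j : Fin (n + 1)) : Set (Fin (n + 1) → ℂ) :=
  {x | fermatEqns n k lam x ∧ x j = 0 ∧ x (gfPivot n j) = 1}

noncomputable def gfToProj (n : ℕ) (x : Fin (n + 1) → ℂ) :
    Projectivization ℂ (Fin (n + 1) → ℂ) :=
  if h : x ≠ 0 then Projectivization.mk ℂ x h
  else Projectivization.mk ℂ (fun _ => 1) (fun h' => one_ne_zero (congrFun h' 0))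
lemma val_one_fin (hn : 2 ≤ n) : (1 : Fin (n + 1)).val = 1 := by
  rw [Fin.val_one']; exact Nat.mod_eq_of_lt (by omega)

lemma ne_one_zero_fin (hn : 2 ≤ n) : (1 : Fin (n + 1)) ≠ 0 :=
  Fin.ne_of_val_ne (by rw [val_one_fin hn]; simp)

lemma two_le_val_fin (hn : 2 ≤ n) {m : Fin (n + 1)} (h0 : m ≠ 0) (h1 : m ≠ 1) :
    2 ≤ m.val := by
  rcases Nat.lt_or_ge m.val 2 with h | h
  · exfalso
    have : m.val = 0 ∨ m.val = 1 := by omega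
    rcases this with h' | h'
    · exact h0 (Fin.ext (by simpa using h'))
    · exact h1 (Fin.ext (by rw [h', val_one_fin hn]))
  · exact h

lemma cast_val_fin (hn : 2 ≤ n) {m : Fin (n + 1)} (h : 2 ≤ m.val) :
    Fin.ofNat (n + 1) (m.val - 2 + 2) = m := by
  apply Fin.ext
  rw [Fin.val_ofNat, Nat.mod_eq_of_lt (by omega)]
  omega

lemma gfPivot_ne (hn : 2 ≤ n) (j : Fin (n + 1)) : gfPivot n j ≠ j := by
  unfold gfPivot
  split_ifs with h
  · rw [h]; exact ne_one_zero_fin hn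
  · exact fun h' => h h'.symm

lemma lam_ne_zero (hn : 2 ≤ n) (hlam0 : lam 0 = 1)
    (hlam_ne0 : ∀ i, 1 ≤ i → i ≤ n - 2 → lam i ≠ 0) {i : ℕ} (hi : i ≤ n - 2) :
    lam i ≠ 0 := by
  rcases Nat.eq_zero_or_pos i with rfl | h
  · rw [hlam0]; exact one_ne_zero
  · exact hlam_ne0 i h hi

/-- at most one coordinate of a nonzero solution vanishes -/
lemma gf_zero_unique (hk : 2 ≤ k) (hn : 2 ≤ n) (hlam0 : lam 0 = 1)
    (hlam_ne0 : ∀ i, 1 ≤ i → i ≤ n - 2 → lam i ≠ 0)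
    (hlam_inj : ∀ i j, i ≤ n - 2 → j ≤ n - 2 → lam i = lam j → i = j)
    {x : Fin (n + 1) → ℂ} (hx : fermatEqns n k lam x) (hx0 : x ≠ 0)
    {a b : Fin (n + 1)} (ha : x a = 0) (hb : x b = 0) : a = b := by
  have hk0 : k ≠ 0 := by omega
  have key : x 0 = 0 → x 1 = 0 → False := by
    intro h0 h1
    apply hx0
    funext m
    show x m = 0
    by_cases hm0 : m = 0
    · rw [hm0]; exact h0
    by_cases hm1 : m = 1
    · rw [hm1]; exact h1
    have hm2 := two_le_val_fin hn hm0 hm1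
    have := hx (m.val - 2) (by omega)
    rw [cast_val_fin hn hm2, h0, h1, zero_pow hk0, mul_zero, zero_add, zero_add] at this
    exact pow_eq_zero_iff hk0 |>.mp this
  have main : ∀ a b : Fin (n + 1), a.val < b.val → x a = 0 → x b = 0 → False := by
    intro a b hab ha hb
    by_cases hb2 : 2 ≤ b.val
    · have hbe0 : b ≠ 0 := fun h => by simp [h] at hb2
      have eb := hx (b.val - 2) (by omega)
      rw [cast_val_fin hn hb2, hb, zero_pow hk0, add_zero] at eb
      by_cases ha2 : 2 ≤ a.val
      · have ea := hx (a.val - 2) (by omega)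
        rw [cast_val_fin hn ha2, ha, zero_pow hk0, add_zero] at ea
        have hne : lam (a.val - 2) ≠ lam (b.val - 2) := by
          intro h
          have := hlam_inj _ _ (by omega) (by omega) h
          omega
        have hx0k : x 0 ^ k = 0 := by
          have hsub : (lam (a.val - 2) - lam (b.val - 2)) * x 0 ^ k = 0 := by
            linear_combination ea - eb
          rcases mul_eq_zero.mp hsub with h | h
          · exact absurd (sub_eq_zero.mp h) hne
          · exact h
        have h0 : x 0 = 0 := pow_eq_zero_iff hk0 |>.mp hx0k
        have h1 : x 1 = 0 := by
          apply pow_eq_zero_iff hk0 |>.mp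
          rw [h0, zero_pow hk0, mul_zero, zero_add] at eb
          exact eb
        exact key h0 h1
      · have : a.val = 0 ∨ a.val = 1 := by omega
        rcases this with h' | h'
        · have ha0 : x 0 = 0 := by rwa [show a = 0 from Fin.ext (by simpa using h')] at ha
          rw [ha0, zero_pow hk0, mul_zero, zero_add] at eb
          exact key ha0 (pow_eq_zero_iff hk0 |>.mp eb)
        · have ha1 : x 1 = 0 := by
            rwa [show a = 1 from Fin.ext (by rw [h', val_one_fin hn])] at ha
          rw [ha1, zero_pow hk0, add_zero] at eb
          rcases mul_eq_zero.mp eb with h | h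
          · exact lam_ne_zero hn hlam0 hlam_ne0 (by omega : b.val - 2 ≤ n - 2) h
          · exact key (pow_eq_zero_iff hk0 |>.mp h) ha1
    · have hav : a.val = 0 := by omega
      have hbv : b.val = 1 := by omega
      exact key (by rwa [show a = 0 from Fin.ext (by simpa using hav)] at ha)
        (by rwa [show b = 1 from Fin.ext (by rw [hbv, val_one_fin hn])] at hb)
  rcases lt_trichotomy a.val b.val with h | h | h
  · exact absurd (main a b h ha hb) (not_false)
  · exact Fin.ext h
  · exact absurd (main b a h hb ha) (not_false)

lemma fermatEqns_smul {x : Fin (n + 1) → ℂ} (h : fermatEqns n k lam x) (c : ℂ) :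
    fermatEqns n k lam (c • x) := by
  intro i hi
  have := h i hi
  simp only [Pi.smul_apply, smul_eq_mul, mul_pow]
  linear_combination (c ^ k) * this

lemma gfA_eq_pi (hk : 2 ≤ k) (hn : 2 ≤ n) (j : Fin (n + 1)) :
    gfA n k lam j = Set.pi Set.univ (gfSet n k lam j) := by
  have hk0 : k ≠ 0 := by omega
  ext x
  simp only [gfA, Set.mem_setOf_eq, Set.mem_pi, Set.mem_univ, forall_true_left]
  constructor
  · rintro ⟨heq, hj, hp⟩ m
    unfold gfSet
    split_ifs with h1 h2
    · rw [h1] at *; simpa using hj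
    · rw [h2] at *; simpa using hp
    · -- m ≠ j, m ≠ pivot
      show x m ^ k = gfTarget n lam j m
      by_cases hj0 : j = 0
      · subst hj0
        have hm1 : m ≠ 1 := by simpa [gfPivot] using h2
        have hx1 : x 1 = 1 := by simpa [gfPivot] using hp
        have hm2 := two_le_val_fin hn h1 hm1
        have e := heq (m.val - 2) (by omega)
        rw [cast_val_fin hn hm2, hj, hx1, zero_pow hk0, one_pow, mul_zero, zero_add] at e
        rw [gfTarget, if_neg hm1, if_pos rfl]
        linear_combination e
      · have hp0 : x 0 = 1 := by simpa [gfPivot, hj0] using hp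
        have hm0 : m ≠ 0 := by simpa [gfPivot, hj0] using h2
        by_cases hj1 : j = 1
        · subst hj1
          have hm2 := two_le_val_fin hn hm0 h1
          have e := heq (m.val - 2) (by omega)
          rw [cast_val_fin hn hm2, hj, hp0, zero_pow hk0, one_pow, mul_one, add_zero] at e
          rw [gfTarget, if_neg h1, if_neg hj0, if_pos rfl]
          linear_combination e
        · have hj2 := two_le_val_fin hn hj0 hj1
          have ej := heq (j.val - 2) (by omega)
          rw [cast_val_fin hn hj2, hj, hp0, zero_pow hk0, one_pow, mul_one, add_zero] at ej
          -- ej : lam (j.val - 2) + x 1 ^ k = 0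
          by_cases hm1 : m = 1
          · rw [hm1, gfTarget, if_pos rfl]
            linear_combination ej
          · have hm2 := two_le_val_fin hn hm0 hm1
            have em := heq (m.val - 2) (by omega)
            rw [cast_val_fin hn hm2, hp0, one_pow, mul_one] at em
            rw [gfTarget, if_neg hm1, if_neg hj0, if_neg hj1]
            linear_combination em - ej
  · intro h
    have hj : x j = 0 := by
      have := h j
      rw [gfSet, if_pos rfl] at this
      simpa using this
    have hp : x (gfPivot n j) = 1 := by
      have := h (gfPivot n j)
      rw [gfSet, if_neg (gfPivot_ne hn j), if_pos rfl] at this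
      simpa using this
    have hrest : ∀ m, m ≠ j → m ≠ gfPivot n j → x m ^ k = gfTarget n lam j m := by
      intro m h1 h2
      have := h m
      rwa [gfSet, if_neg h1, if_neg h2] at this
    refine ⟨?_, hj, hp⟩
    intro i hi
    set m : Fin (n + 1) := Fin.ofNat (n + 1) (i + 2) with hm
    have hmv : m.val = i + 2 := by rw [hm, Fin.val_ofNat]; exact Nat.mod_eq_of_lt (by omega)
    have hm0 : m ≠ 0 := Fin.ne_of_val_ne (by rw [hmv]; simp)
    have hm1 : m ≠ 1 := Fin.ne_of_val_ne (by rw [hmv, val_one_fin hn]; omega)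
    by_cases hj0 : j = 0
    · subst hj0
      have hx1 : x 1 = 1 := by simpa [gfPivot] using hp
      have hxm : x m ^ k = -1 := by
        have := hrest m hm0 (by rw [gfPivot, if_pos rfl]; exact hm1)
        rwa [gfTarget, if_neg hm1, if_pos rfl] at this
      rw [hj, hx1, hxm, zero_pow hk0, one_pow, mul_zero]
      ring
    · have hp0 : x 0 = 1 := by simpa [gfPivot, hj0] using hp
      have hpvt : gfPivot n j = 0 := by rw [gfPivot, if_neg hj0]
      by_cases hj1 : j = 1
      · subst hj1
        have hxm : x m ^ k = -lam (m.val - 2) := by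
          have := hrest m hm1 (by rw [hpvt]; exact hm0)
          rwa [gfTarget, if_neg hm1, if_neg hj0, if_pos rfl] at this
        rw [hj, hp0, hxm, zero_pow hk0, one_pow, mul_one, hmv]
        simp
      · have hj2 := two_le_val_fin hn hj0 hj1
        have hx1k : x 1 ^ k = -lam (j.val - 2) := by
          have h1j : (1 : Fin (n + 1)) ≠ j := by
            intro h'; exact hj1 h'.symm
          have := hrest 1 h1j (by rw [hpvt]; exact ne_one_zero_fin hn)
          rwa [gfTarget, if_pos rfl] at this
        by_cases hmj : m = j
        · have hiv : j.val - 2 = i := by rw [← hmj, hmv]; omega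
          rw [hp0, one_pow, mul_one, hmj, hj, hx1k, hiv, zero_pow hk0]
          ring
        · have hxm : x m ^ k = lam (j.val - 2) - lam (m.val - 2) := by
            have := hrest m hmj (by rw [hpvt]; exact hm0)
            rwa [gfTarget, if_neg hm1, if_neg hj0, if_neg hj1] at this
          rw [hp0, one_pow, mul_one, hx1k, hxm, hmv, Nat.add_sub_cancel]; ring
open Polynomial in
lemma card_pow_set (hk0 : k ≠ 0) {c : ℂ} (hc : c ≠ 0) :
    {y : ℂ | y ^ k = c}.Finite ∧ Nat.card {y : ℂ | y ^ k = c} = k := by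
  have hset : {y : ℂ | y ^ k = c} = ↑((nthRoots k c).toFinset) := by
    ext y; simp [Polynomial.mem_nthRoots (Nat.pos_of_ne_zero hk0)]
  constructor
  · rw [hset]; exact Finset.finite_toSet _
  · rw [hset, Nat.card_coe_set_eq, Set.ncard_coe_finset,
      Multiset.toFinset_card_of_nodup ((Complex.isPrimitiveRoot_exp k hk0).nthRoots_nodup hc),
      (Complex.isPrimitiveRoot_exp k hk0).card_nthRoots,
      if_pos (IsAlgClosed.exists_pow_nat_eq c (Nat.pos_of_ne_zero hk0))]

lemma ncard_iUnion_eq {α ι : Type*} [Fintype ι] (s : ι → Set α) (hfin : ∀ i, (s i).Finite)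
    (hdisj : ∀ i j, i ≠ j → Disjoint (s i) (s j)) :
    (⋃ i, s i).ncard = ∑ i, (s i).ncard := by
  classical
  have h1 : (⋃ i, s i) = ↑(Finset.univ.biUnion fun i => (hfin i).toFinset) := by
    rw [Finset.coe_biUnion]
    simp [Set.Finite.coe_toFinset]
  rw [h1, Set.ncard_coe_finset, Finset.card_biUnion]
  · exact Finset.sum_congr rfl fun i _ => (Set.ncard_eq_toFinset_card (s i) (hfin i)).symm
  · intro i _ j _ hij
    rw [Function.onFun, Set.Finite.disjoint_toFinset]
    exact hdisj i j hij
lemma gfTarget_ne_zero (hn : 2 ≤ n) (hlam0 : lam 0 = 1)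
    (hlam_ne0 : ∀ i, 1 ≤ i → i ≤ n - 2 → lam i ≠ 0)
    (hlam_inj : ∀ i j, i ≤ n - 2 → j ≤ n - 2 → lam i = lam j → i = j)
    {j m : Fin (n + 1)} (hmj : m ≠ j) (hmp : m ≠ gfPivot n j) :
    gfTarget n lam j m ≠ 0 := by
  by_cases hm1 : m = 1
  · subst hm1
    have hj0 : j ≠ 0 := by
      intro h; apply hmp; rw [h, gfPivot, if_pos rfl]
    have hj1 : j ≠ 1 := fun h => hmj h.symm
    have hj2 := two_le_val_fin hn hj0 hj1
    rw [gfTarget, if_pos rfl]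
    exact neg_ne_zero.mpr (lam_ne_zero hn hlam0 hlam_ne0 (by omega))
  · rw [gfTarget, if_neg hm1]
    by_cases hj0 : j = 0
    · rw [if_pos hj0]; exact neg_ne_zero.mpr one_ne_zero
    · rw [if_neg hj0]
      have hm0 : m ≠ 0 := by rwa [gfPivot, if_neg hj0] at hmp
      have hm2 := two_le_val_fin hn hm0 hm1
      by_cases hj1 : j = 1
      · rw [if_pos hj1]
        exact neg_ne_zero.mpr (lam_ne_zero hn hlam0 hlam_ne0 (by omega))
      · rw [if_neg hj1]
        have hj2 := two_le_val_fin hn hj0 hj1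
        apply sub_ne_zero.mpr
        intro h
        have := hlam_inj _ _ (by omega) (by omega) h
        exact hmj (Fin.ext (by omega))

lemma gfSet_finite (hk : 2 ≤ k) (hn : 2 ≤ n) (hlam0 : lam 0 = 1)
    (hlam_ne0 : ∀ i, 1 ≤ i → i ≤ n - 2 → lam i ≠ 0)
    (hlam_inj : ∀ i j, i ≤ n - 2 → j ≤ n - 2 → lam i = lam j → i = j)
    (j m : Fin (n + 1)) : (gfSet n k lam j m).Finite := by
  rw [gfSet]
  split_ifs with h1 h2
  · exact Set.finite_singleton _
  · exact Set.finite_singleton _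
  · exact (card_pow_set (by omega)
      (gfTarget_ne_zero hn hlam0 hlam_ne0 hlam_inj h1 h2)).1

lemma gfA_finite_card (hk : 2 ≤ k) (hn : 2 ≤ n) (hlam0 : lam 0 = 1)
    (hlam_ne0 : ∀ i, 1 ≤ i → i ≤ n - 2 → lam i ≠ 0)
    (hlam_inj : ∀ i j, i ≤ n - 2 → j ≤ n - 2 → lam i = lam j → i = j)
    (j : Fin (n + 1)) :
    (gfA n k lam j).Finite ∧ (gfA n k lam j).ncard = k ^ (n - 1) := by
  classical
  rw [gfA_eq_pi hk hn]
  constructor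
  · exact Set.Finite.pi fun m => gfSet_finite hk hn hlam0 hlam_ne0 hlam_inj j m
  · rw [← Nat.card_coe_set_eq, Nat.card_congr (Equiv.Set.univPi _), Nat.card_pi]
    have hcard : ∀ m : Fin (n + 1), m ≠ j → m ≠ gfPivot n j →
        Nat.card ↥(gfSet n k lam j m) = k := by
      intro m h1 h2
      rw [gfSet, if_neg h1, if_neg h2]
      exact (card_pow_set (by omega)
        (gfTarget_ne_zero hn hlam0 hlam_ne0 hlam_inj h1 h2)).2
    have h1 : Nat.card ↥(gfSet n k lam j j) = 1 := by
      rw [gfSet, if_pos rfl, Nat.card_coe_set_eq, Set.ncard_singleton]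
    have h2 : Nat.card ↥(gfSet n k lam j (gfPivot n j)) = 1 := by
      rw [gfSet, if_neg (gfPivot_ne hn j), if_pos rfl, Nat.card_coe_set_eq,
        Set.ncard_singleton]
    rw [← Finset.prod_subset (Finset.subset_univ (Finset.univ \ {j, gfPivot n j}))
        (fun m _ hm => by
          simp only [Finset.mem_sdiff, Finset.mem_univ, true_and, not_not,
            Finset.mem_insert, Finset.mem_singleton] at hm
          rcases hm with rfl | rfl
          · exact h1
          · exact h2)]
    rw [Finset.prod_congr rfl (fun m hm => by
      simp only [Finset.mem_sdiff, Finset.mem_insert, Finset.mem_singleton, not_or] at hm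
      exact hcard m hm.2.1 hm.2.2)]
    rw [Finset.prod_const, Finset.card_sdiff_of_subset (Finset.subset_univ _), Finset.card_univ,
      Fintype.card_fin,
      Finset.card_insert_of_notMem (by simpa using (gfPivot_ne hn j).symm),
      Finset.card_singleton]
    congr 1
end GFAux

/-- the set `F` of points of the generalized Fermat curve `S` of type
`(k,n)` having at least one vanishing homogeneous coordinate (the fixed point set of the
generalized Fermat group `H = ⟨φ₀, …, φₙ⟩`) is finite of cardinality `(n+1)·k^{n-1}`. -/
theorem stmt_11 (k n : ℕ) (hk : 2 ≤ k) (hn : 2 ≤ n)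
    (lam : ℕ → ℂ) (hlam0 : lam 0 = 1)
    (hlam_ne0 : ∀ i, 1 ≤ i → i ≤ n - 2 → lam i ≠ 0)
    (hlam_ne1 : ∀ i, 1 ≤ i → i ≤ n - 2 → lam i ≠ 1)
    (hlam_inj : ∀ i j, i ≤ n - 2 → j ≤ n - 2 → lam i = lam j → i = j) :
    {p : Projectivization ℂ (Fin (n + 1) → ℂ) |
        fermatEqns n k lam p.rep ∧ ∃ j : Fin (n + 1), p.rep j = 0}.Finite ∧
    {p : Projectivization ℂ (Fin (n + 1) → ℂ) |
        fermatEqns n k lam p.rep ∧ ∃ j : Fin (n + 1), p.rep j = 0}.ncard =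
      (n + 1) * k ^ (n - 1) := by
  classical
  have hAfin := fun j : Fin (n + 1) => gfA_finite_card hk hn hlam0 hlam_ne0 hlam_inj j
  have hmemne : ∀ (j : Fin (n + 1)) (x : Fin (n + 1) → ℂ), x ∈ gfA n k lam j → x ≠ 0 := by
    intro j x hx h0
    have h1 := hx.2.2
    rw [h0] at h1
    exact one_ne_zero h1.symm
  have hdisj : ∀ i j : Fin (n + 1), i ≠ j →
      Disjoint (gfA n k lam i) (gfA n k lam j) := by
    intro i j hij
    rw [Set.disjoint_left]
    intro x hxi hxj
    exact hij (gf_zero_unique hk hn hlam0 hlam_ne0 hlam_inj hxi.1 (hmemne i x hxi)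
      hxi.2.1 hxj.2.1)
  set U : Set (Fin (n + 1) → ℂ) := ⋃ j, gfA n k lam j with hU
  have hinj : Set.InjOn (gfToProj n) U := by
    intro x hx y hy hxy
    obtain ⟨jx, hxj⟩ := Set.mem_iUnion.mp hx
    obtain ⟨jy, hyj⟩ := Set.mem_iUnion.mp hy
    have hx0 := hmemne _ _ hxj
    have hy0 := hmemne _ _ hyj
    rw [gfToProj, dif_pos hx0, gfToProj, dif_pos hy0] at hxy
    obtain ⟨a, ha⟩ := (Projectivization.mk_eq_mk_iff' ℂ x y hx0 hy0).mp hxy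
    have hxjy : x jy = 0 := by
      rw [← ha, Pi.smul_apply, hyj.2.1, smul_zero]
    have hjj : jx = jy := gf_zero_unique hk hn hlam0 hlam_ne0 hlam_inj hxj.1 hx0
      hxj.2.1 hxjy
    subst hjj
    have ha1 : a = 1 := by
      have h1 := hxj.2.2
      rw [← ha, Pi.smul_apply, hyj.2.2, smul_eq_mul, mul_one] at h1
      exact h1
    rw [← ha, ha1, one_smul]
  have himg : gfToProj n '' U =
      {p : Projectivization ℂ (Fin (n + 1) → ℂ) |
        fermatEqns n k lam p.rep ∧ ∃ j : Fin (n + 1), p.rep j = 0} := by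
    ext p
    constructor
    · rintro ⟨x, hxU, rfl⟩
      obtain ⟨j, hxj⟩ := Set.mem_iUnion.mp hxU
      have hx0 := hmemne _ _ hxj
      have hmk : gfToProj n x = Projectivization.mk ℂ x hx0 := dif_pos hx0
      rw [hmk]
      obtain ⟨a, ha⟩ := Projectivization.exists_smul_eq_mk_rep ℂ x hx0
      refine ⟨?_, j, ?_⟩
      · rw [← ha]
        exact fermatEqns_smul hxj.1 a
      · rw [← ha, Pi.smul_apply, hxj.2.1, smul_zero]
    · rintro ⟨heqns, j, hj⟩
      have hrep : p.rep ≠ 0 := Projectivization.rep_nonzero p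
      have hpivne : p.rep (gfPivot n j) ≠ 0 := by
        intro h
        exact gfPivot_ne hn j
          (gf_zero_unique hk hn hlam0 hlam_ne0 hlam_inj heqns hrep h hj)
      set c : ℂ := (p.rep (gfPivot n j))⁻¹ with hc
      have hc0 : c ≠ 0 := inv_ne_zero hpivne
      have hxA : c • p.rep ∈ gfA n k lam j := by
        refine ⟨fermatEqns_smul heqns c, ?_, ?_⟩
        · rw [Pi.smul_apply, hj, smul_zero]
        · rw [Pi.smul_apply, smul_eq_mul, hc, inv_mul_cancel₀ hpivne]
      have hx0 : c • p.rep ≠ 0 := hmemne _ _ hxA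
      refine ⟨c • p.rep, Set.mem_iUnion.mpr ⟨j, hxA⟩, ?_⟩
      rw [gfToProj, dif_pos hx0]
      conv_rhs => rw [← Projectivization.mk_rep p]
      exact (Projectivization.mk_eq_mk_iff' ℂ _ _ hx0 hrep).mpr ⟨c, rfl⟩
  have hUfin : U.Finite := Set.finite_iUnion fun j => (hAfin j).1
  constructor
  · rw [← himg]
    exact hUfin.image _
  · rw [← himg, Set.ncard_image_of_injOn hinj, hU,
      ncard_iUnion_eq _ (fun j => (hAfin j).1) hdisj]
    rw [Finset.sum_congr rfl fun j _ => (hAfin j).2, Finset.sum_const, Finset.card_univ,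
      Fintype.card_fin, smul_eq_mul]
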